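/- Let k ≥ 2, n = 3k+2, and let I = I(P_n) be the edge ideal of the path P_n in S = K[x_1,…,x_n] over a field K. Let P = {a ∈ N^n : x^a ∉ I and x^a divides x_1x_2⋯x_n} be the characteristic poset of S/I, let α = Σ_{i=1}^{k−1} e_{3i−1} ∈ N^n, and let P_{k+2,α} = {a ∈ P : |a| = k+2 and x^α divides x^a}. Then P_{k+2,α} = {α + e_{3k−2} + e_{3k} + e_{3k+2}}; moreover A = Σ_{i=1}^{k} e_{3i−1} belongs to P and |A| = k. -/
import Mathlib


open MvPolynomial

/-- The edge ideal `I(P_m)` of the path `P_m` on vertices `x_1, …, x_m`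
(0-indexed as `X 0, …, X (m-1)`), regarded as an ideal of `S = K[x_1, …, x_n]`:
it is generated by the monomials `X i * X (i+1)` for `i + 2 ≤ m`
(1-indexed: `x_i x_{i+1}` for `1 ≤ i ≤ m - 1`). -/
noncomputable def pathIdeal (K : Type*) [Field K] (n m : ℕ) :
    Ideal (MvPolynomial (Fin n) K) :=
  Ideal.span {p | ∃ i j : Fin n, (j : ℕ) = (i : ℕ) + 1 ∧ (i : ℕ) + 2 ≤ m ∧ p = X i * X j}

private lemma sum_range_mod3 (M : ℕ) :
    ∑ j ∈ Finset.range (3 * M), (if j % 3 = 1 then (1:ℕ) else 0) = M := by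
  induction M with
  | zero => simp
  | succ M ih =>
    have h : 3 * (M + 1) = 3 * M + 1 + 1 + 1 := by ring
    rw [h, Finset.sum_range_succ, Finset.sum_range_succ, Finset.sum_range_succ, ih]
    split_ifs <;> omega

private lemma sum_range_ind (M v : ℕ) :
    ∑ i ∈ Finset.range M, (if 3 * i + 1 = v then (1:ℕ) else 0)
      = if v % 3 = 1 ∧ v < 3 * M then 1 else 0 := by
  induction M with
  | zero => simp
  | succ M ih =>
    rw [Finset.sum_range_succ, ih]
    split_ifs <;> omega

private lemma sum_single_apply {n M : ℕ} (h : ∀ i : Fin M, 3 * (i:ℕ) + 1 < n) (j : Fin n) :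
    (∑ i : Fin M, Finsupp.single (⟨3 * (i:ℕ) + 1, h i⟩ : Fin n) 1) j
      = if (j:ℕ) % 3 = 1 ∧ (j:ℕ) < 3 * M then 1 else 0 := by
  classical
  rw [Finsupp.finset_sum_apply]
  have key : ∀ i : Fin M, (Finsupp.single (⟨3 * (i:ℕ) + 1, h i⟩ : Fin n) 1 : Fin n →₀ ℕ) j
      = if 3 * (i:ℕ) + 1 = (j:ℕ) then 1 else 0 := by
    intro i
    rw [Finsupp.single_apply]
    refine if_congr ?_ rfl rfl
    rw [Fin.ext_iff]
  rw [Finset.sum_congr rfl fun i _ => key i]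
  rw [Fin.sum_univ_eq_sum_range (fun i => if 3 * i + 1 = (j:ℕ) then 1 else 0) M]
  exact sum_range_ind M (j:ℕ)

private lemma sum_single_apply' {n M : ℕ} (h : ∀ i : Fin M, 3 * (i:ℕ) + 1 < n)
    (p : ℕ) (hp : p < n) :
    (∑ i : Fin M, Finsupp.single (⟨3 * (i:ℕ) + 1, h i⟩ : Fin n) 1) ⟨p, hp⟩
      = if p % 3 = 1 ∧ p < 3 * M then 1 else 0 :=
  sum_single_apply h ⟨p, hp⟩

private lemma monomial_mem_pathIdeal_iff' {K : Type*} [Field K] {n : ℕ} (a : Fin n →₀ ℕ)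
    (I : Ideal (MvPolynomial (Fin n) K))
    (hI : I = Ideal.span {p | ∃ i j : Fin n,
        (j : ℕ) = (i : ℕ) + 1 ∧ (i : ℕ) + 2 ≤ n ∧ p = X i * X j}) :
    (monomial a (1 : K)) ∈ I ↔
      ∃ i j : Fin n, (j:ℕ) = (i:ℕ) + 1 ∧ 1 ≤ a i ∧ 1 ≤ a j := by
  classical
  subst hI
  have hX : ∀ i j : Fin n, (X i * X j : MvPolynomial (Fin n) K)
      = monomial (Finsupp.single i 1 + Finsupp.single j 1) 1 := by
    intro i j
    rw [X, X, monomial_mul, one_mul]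
  have hset : {p : MvPolynomial (Fin n) K |
        ∃ i j : Fin n, (j : ℕ) = (i : ℕ) + 1 ∧ (i : ℕ) + 2 ≤ n ∧ p = X i * X j}
      = (fun s => monomial s (1:K)) ''
        {s : Fin n →₀ ℕ | ∃ i j : Fin n, (j:ℕ) = (i:ℕ) + 1 ∧
            s = Finsupp.single i 1 + Finsupp.single j 1} := by
    ext p
    simp only [Set.mem_setOf_eq, Set.mem_image]
    constructor
    · rintro ⟨i, j, hij, -, rfl⟩
      exact ⟨Finsupp.single i 1 + Finsupp.single j 1, ⟨i, j, hij, rfl⟩, (hX i j).symm⟩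
    · rintro ⟨s, ⟨i, j, hij, rfl⟩, rfl⟩
      exact ⟨i, j, hij, by have := j.isLt; omega, (hX i j).symm⟩
  rw [hset, mem_ideal_span_monomial_image]
  rw [support_monomial, if_neg (one_ne_zero)]
  simp only [Finset.mem_singleton, forall_eq, Set.mem_setOf_eq]
  constructor
  · rintro ⟨s, ⟨i, j, hij, rfl⟩, hle⟩
    have hne : i ≠ j := by
      intro h; rw [h] at hij; omega
    have hi := hle i
    have hj := hle j
    simp only [Finsupp.add_apply, Finsupp.single_eq_same, Finsupp.single_eq_of_ne hne,
      Finsupp.single_eq_of_ne (Ne.symm hne)] at hi hj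
    exact ⟨i, j, hij, by omega, by omega⟩
  · rintro ⟨i, j, hij, hi, hj⟩
    refine ⟨Finsupp.single i 1 + Finsupp.single j 1, ⟨i, j, hij, rfl⟩, ?_⟩
    intro p
    rcases eq_or_ne p i with rfl | hpi
    · have hne : p ≠ j := by intro h; rw [h] at hij; omega
      simp [Finsupp.single_apply, hne, Ne.symm hne, hi]
    · rcases eq_or_ne p j with rfl | hpj
      · simp [Finsupp.single_apply, Ne.symm hpi, hj]
      · simp [Finsupp.single_apply, Ne.symm hpi, Ne.symm hpj]

private lemma monomial_dvd_prod_iff {K : Type*} [Field K] {n : ℕ} (a : Fin n →₀ ℕ) :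
    (monomial a (1:K)) ∣ ∏ i : Fin n, X i ↔ ∀ p : Fin n, a p ≤ 1 := by
  classical
  have hprod : (∏ i : Fin n, X i : MvPolynomial (Fin n) K)
      = monomial (∑ i : Fin n, Finsupp.single i 1) 1 := by
    rw [monomial_sum_one]
    exact Finset.prod_congr rfl fun i _ => rfl
  have hone : ∀ p : Fin n, (∑ i : Fin n, Finsupp.single i 1 : Fin n →₀ ℕ) p = 1 := by
    intro p
    rw [Finsupp.finset_sum_apply]
    simp [Finsupp.single_apply]
  rw [hprod, monomial_dvd_monomial]
  simp only [one_ne_zero, false_or, one_dvd, and_true]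
  constructor
  · intro hle p
    have := hle p
    rw [hone p] at this
    exact this
  · intro h p
    rw [hone p]
    exact h p

private lemma monomial_dvd_monomial_iff {K : Type*} [Field K] {n : ℕ} (a b : Fin n →₀ ℕ) :
    (monomial a (1:K)) ∣ monomial b 1 ↔ ∀ p, a p ≤ b p := by
  rw [monomial_dvd_monomial]
  simp only [one_ne_zero, false_or, one_dvd, and_true]
  exact Finsupp.le_def

private lemma sum_finsupp_eq {n : ℕ} (a : Fin n →₀ ℕ) (f : ℕ → ℕ)
    (h : ∀ (p : ℕ) (hp : p < n), a ⟨p, hp⟩ = f p) :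
    ∑ j : Fin n, a j = ∑ p ∈ Finset.range n, f p := by
  rw [← Fin.sum_univ_eq_sum_range]
  exact Finset.sum_congr rfl fun i _ => h i.val i.isLt

private lemma sum_range_split5 (g : ℕ → ℕ) (N' N : ℕ) (h : N' = N + 5) :
    ∑ p ∈ Finset.range N', g p
      = (∑ p ∈ Finset.range N, g p)
        + (g N + g (N+1) + g (N+2) + g (N+3) + g (N+4)) := by
  subst h
  rw [Finset.sum_range_succ, Finset.sum_range_succ, Finset.sum_range_succ,
    Finset.sum_range_succ, Finset.sum_range_succ]
  ring

private lemma sum_range_split2 (g : ℕ → ℕ) (N' N : ℕ) (h : N' = N + 2) :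
    ∑ p ∈ Finset.range N', g p
      = (∑ p ∈ Finset.range N, g p) + (g N + g (N+1)) := by
  subst h
  rw [Finset.sum_range_succ, Finset.sum_range_succ]
  ring

private lemma tval (m : ℕ) (h1 : ∀ i : Fin (m+2-1), 3*(i:ℕ)+1 < 3*(m+2)+2)
    (e0 : 3*(m+2)-3 < 3*(m+2)+2) (e1 : 3*(m+2)-1 < 3*(m+2)+2)
    (e2 : 3*(m+2)+1 < 3*(m+2)+2) (p : ℕ) (hp : p < 3*(m+2)+2) :
    ((∑ i : Fin (m+2-1), Finsupp.single (⟨3*(i:ℕ)+1, h1 i⟩ : Fin (3*(m+2)+2)) 1)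
      + Finsupp.single (⟨3*(m+2)-3, e0⟩ : Fin (3*(m+2)+2)) 1
      + Finsupp.single (⟨3*(m+2)-1, e1⟩ : Fin (3*(m+2)+2)) 1
      + Finsupp.single (⟨3*(m+2)+1, e2⟩ : Fin (3*(m+2)+2)) 1 : Fin (3*(m+2)+2) →₀ ℕ) ⟨p, hp⟩
    = if (p % 3 = 1 ∧ p < 3*m+3) ∨ p = 3*m+3 ∨ p = 3*m+3+2 ∨ p = 3*m+3+4
      then 1 else 0 := by
  classical
  rw [Finsupp.add_apply, Finsupp.add_apply, Finsupp.add_apply, sum_single_apply']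
  simp only [Finsupp.single_apply, Fin.mk.injEq]
  split_ifs <;> omega

/-- Let `k ≥ 2`, `n = 3k + 2` and `I = I(P_n)` in `S = K[x_1, …, x_n]`. In the
characteristic poset `P = {a ∈ ℕⁿ : x ^ a ∉ I and x ^ a ∣ x_1 ⋯ x_n}` of `S/I`,
with `α = Σ_{i=1}^{k-1} e_{3i-1}` (written 0-indexed below), one has
`P_{k+2, α} = {α + e_{3k-2} + e_{3k} + e_{3k+2}}`; moreover
`A = Σ_{i=1}^{k} e_{3i-1}` belongs to `P` and `|A| = k`. -/
theorem charPoset_path_three_mul_add_two {K : Type*} [Field K] (k n : ℕ) (hk : 2 ≤ k)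
    (hn : n = 3 * k + 2) :
    ({a : Fin n →₀ ℕ |
        ((monomial a (1 : K)) ∉ pathIdeal K n n ∧ (monomial a (1 : K)) ∣ ∏ i : Fin n, X i) ∧
        (∑ j : Fin n, a j) = k + 2 ∧
        (monomial (∑ i : Fin (k - 1), Finsupp.single (⟨3 * (i : ℕ) + 1, by omega⟩ : Fin n) 1)
          (1 : K)) ∣ (monomial a (1 : K))} =
      {(∑ i : Fin (k - 1), Finsupp.single (⟨3 * (i : ℕ) + 1, by omega⟩ : Fin n) 1) +
        Finsupp.single (⟨3 * k - 3, by omega⟩ : Fin n) 1 +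
        Finsupp.single (⟨3 * k - 1, by omega⟩ : Fin n) 1 +
        Finsupp.single (⟨3 * k + 1, by omega⟩ : Fin n) 1}) ∧
    ((monomial (∑ i : Fin k, Finsupp.single (⟨3 * (i : ℕ) + 1, by omega⟩ : Fin n) 1)
        (1 : K)) ∉ pathIdeal K n n ∧
      (monomial (∑ i : Fin k, Finsupp.single (⟨3 * (i : ℕ) + 1, by omega⟩ : Fin n) 1)
        (1 : K)) ∣ ∏ i : Fin n, X i) ∧
    (∑ j : Fin n, (∑ i : Fin k, Finsupp.single (⟨3 * (i : ℕ) + 1, by omega⟩ : Fin n) 1) j)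
      = k := by
  subst hn
  obtain ⟨m, rfl⟩ : ∃ m, k = m + 2 := ⟨k - 2, by omega⟩
  have hmem : ∀ a : Fin (3*(m+2)+2) →₀ ℕ,
      ((monomial a (1:K)) ∈ pathIdeal K (3*(m+2)+2) (3*(m+2)+2)) ↔
        ∃ i j : Fin (3*(m+2)+2), (j:ℕ) = (i:ℕ) + 1 ∧ 1 ≤ a i ∧ 1 ≤ a j :=
    fun a => monomial_mem_pathIdeal_iff' a _ rfl
  refine ⟨?_, ⟨?_, ?_⟩, ?_⟩
  · ext a
    simp only [Set.mem_setOf_eq, Set.mem_singleton_iff, hmem,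
      monomial_dvd_prod_iff, monomial_dvd_monomial_iff]
    constructor
    · rintro ⟨⟨hni, hsq⟩, hsum, hal⟩
      have hadj : ∀ (p q : ℕ) (h1 : p < 3*(m+2)+2) (h2 : q < 3*(m+2)+2), q = p + 1 →
          a ⟨p, h1⟩ + a ⟨q, h2⟩ ≤ 1 := by
        intro p q h1 h2 hpq
        have b1 := hsq ⟨p, h1⟩
        have b2 := hsq ⟨q, h2⟩
        by_contra hcon
        exact hni ⟨⟨p, h1⟩, ⟨q, h2⟩, hpq, by omega, by omega⟩
      have halpha : ∀ (p : ℕ) (hp : p < 3*(m+2)+2),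
          (if p % 3 = 1 ∧ p < 3*(m+2-1) then 1 else 0) ≤ a ⟨p, hp⟩ := by
        intro p hp
        have h := hal ⟨p, hp⟩
        rwa [sum_single_apply'] at h
      have hval : ∀ (p : ℕ) (hp3 : p < 3*m+3) (hp : p < 3*(m+2)+2),
          a ⟨p, hp⟩ = if p % 3 = 1 then 1 else 0 := by
        intro p hp3 hp
        by_cases h1 : p % 3 = 1
        · have h := halpha p hp
          rw [if_pos ⟨h1, by omega⟩] at h
          have h2 := hsq ⟨p, hp⟩
          rw [if_pos h1]
          omega
        · rw [if_neg h1]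
          rcases (show p % 3 = 0 ∨ p % 3 = 2 by omega) with h0 | h2
          · have hq : p + 1 < 3*(m+2)+2 := by omega
            have h4 := halpha (p+1) hq
            rw [if_pos ⟨by omega, by omega⟩] at h4
            have h5 := hadj p (p+1) hp hq rfl
            omega
          · obtain ⟨q, rfl⟩ : ∃ q, p = q + 1 := ⟨p - 1, by omega⟩
            have hq : q < 3*(m+2)+2 := by omega
            have h4 := halpha q hq
            rw [if_pos ⟨by omega, by omega⟩] at h4
            have h5 := hadj q (q+1) hq hp rfl
            omega
      rw [sum_finsupp_eq a (fun p => if h : p < 3*(m+2)+2 then a ⟨p, h⟩ else 0)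
          (fun p hp => show a ⟨p, hp⟩ = if h : p < 3*(m+2)+2 then a ⟨p, h⟩ else 0
            from (dif_pos (t := fun h => a ⟨p, h⟩) (e := fun _ => 0) hp).symm)] at hsum
      rw [sum_range_split5 _ _ (3*m+3) (by ring)] at hsum
      have hhead : ∑ p ∈ Finset.range (3*m+3),
          (if h : p < 3*(m+2)+2 then a ⟨p, h⟩ else 0) = m + 1 := by
        have hc : ∀ p ∈ Finset.range (3*m+3),
            (if h : p < 3*(m+2)+2 then a ⟨p, h⟩ else 0) = (if p % 3 = 1 then 1 else 0) := by
          intro p hp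
          rw [Finset.mem_range] at hp
          rw [dif_pos (show p < 3*(m+2)+2 by omega)]
          exact hval p hp _
        rw [Finset.sum_congr rfl hc, show 3*m+3 = 3*(m+1) by ring, sum_range_mod3]
      rw [hhead] at hsum
      have l0 : 3*m+3 < 3*(m+2)+2 := by omega
      have l1 : 3*m+3+1 < 3*(m+2)+2 := by omega
      have l2 : 3*m+3+2 < 3*(m+2)+2 := by omega
      have l3 : 3*m+3+3 < 3*(m+2)+2 := by omega
      have l4 : 3*m+3+4 < 3*(m+2)+2 := by omega
      have hts : ∀ (p : ℕ) (hp : p < 3*(m+2)+2),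
          (if h : p < 3*(m+2)+2 then a ⟨p, h⟩ else 0) = a ⟨p, hp⟩ :=
        fun p hp => dif_pos hp
      rw [hts _ l0, hts _ l1, hts _ l2, hts _ l3, hts _ l4] at hsum
      have q01 := hadj (3*m+3) (3*m+3+1) l0 l1 rfl
      have q12 := hadj (3*m+3+1) (3*m+3+2) l1 l2 (by ring)
      have q23 := hadj (3*m+3+2) (3*m+3+3) l2 l3 (by ring)
      have q34 := hadj (3*m+3+3) (3*m+3+4) l3 l4 (by ring)
      have s0 := hsq ⟨3*m+3, l0⟩
      have s2 := hsq ⟨3*m+3+2, l2⟩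
      have s4 := hsq ⟨3*m+3+4, l4⟩
      have hb : a ⟨3*m+3, l0⟩ = 1 ∧ a ⟨3*m+3+1, l1⟩ = 0 ∧ a ⟨3*m+3+2, l2⟩ = 1 ∧
          a ⟨3*m+3+3, l3⟩ = 0 ∧ a ⟨3*m+3+4, l4⟩ = 1 := by omega
      ext q
      rcases q with ⟨p, hp⟩
      rw [tval]
      rcases lt_or_ge p (3*m+3) with hplt | hpge
      · rw [hval p hplt hp]
        split_ifs <;> omega
      · have hcase : p = 3*m+3 ∨ p = 3*m+3+1 ∨ p = 3*m+3+2 ∨ p = 3*m+3+3 ∨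
            p = 3*m+3+4 := by omega
        rcases hcase with rfl | rfl | rfl | rfl | rfl
        · rw [show a ⟨3*m+3, hp⟩ = 1 from hb.1]; split_ifs <;> omega
        · rw [show a ⟨3*m+3+1, hp⟩ = 0 from hb.2.1]; split_ifs <;> omega
        · rw [show a ⟨3*m+3+2, hp⟩ = 1 from hb.2.2.1]; split_ifs <;> omega
        · rw [show a ⟨3*m+3+3, hp⟩ = 0 from hb.2.2.2.1]; split_ifs <;> omega
        · rw [show a ⟨3*m+3+4, hp⟩ = 1 from hb.2.2.2.2]; split_ifs <;> omega
    · rintro rfl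
      refine ⟨⟨?_, ?_⟩, ?_, ?_⟩
      · rintro ⟨⟨pi, hpi⟩, ⟨pj, hpj⟩, hij, hi, hj⟩
        have hij' : pj = pi + 1 := hij
        rw [tval] at hi
        rw [tval] at hj
        split_ifs at hi hj <;> omega
      · rintro ⟨p, hp⟩
        rw [tval]
        split_ifs <;> omega
      · rw [sum_finsupp_eq _ (fun p => if (p % 3 = 1 ∧ p < 3*m+3) ∨ p = 3*m+3 ∨
            p = 3*m+3+2 ∨ p = 3*m+3+4 then 1 else 0) (fun p hp => tval m _ _ _ _ p hp)]
        rw [sum_range_split5 _ _ (3*m+3) (by ring)]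
        have hc : ∀ p ∈ Finset.range (3*m+3),
            (if (p % 3 = 1 ∧ p < 3*m+3) ∨ p = 3*m+3 ∨ p = 3*m+3+2 ∨ p = 3*m+3+4
              then (1:ℕ) else 0) = (if p % 3 = 1 then 1 else 0) := by
          intro p hp
          rw [Finset.mem_range] at hp
          split_ifs <;> omega
        rw [Finset.sum_congr rfl hc, show 3*m+3 = 3*(m+1) by ring, sum_range_mod3]
        split_ifs <;> omega
      · rintro ⟨p, hp⟩
        rw [tval, sum_single_apply']
        split_ifs <;> omega
  · rw [hmem]
    rintro ⟨⟨pi, hpi⟩, ⟨pj, hpj⟩, hij, hi, hj⟩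
    have hij' : pj = pi + 1 := hij
    rw [sum_single_apply'] at hi
    rw [sum_single_apply'] at hj
    split_ifs at hi hj <;> omega
  · rw [monomial_dvd_prod_iff]
    rintro ⟨p, hp⟩
    rw [sum_single_apply']
    split_ifs <;> omega
  · rw [sum_finsupp_eq _ (fun p => if p % 3 = 1 ∧ p < 3*(m+2) then 1 else 0)
        (fun p hp => sum_single_apply' _ p hp)]
    rw [sum_range_split2 _ _ (3*(m+2)) rfl]
    have hc : ∀ p ∈ Finset.range (3*(m+2)),
        (if p % 3 = 1 ∧ p < 3*(m+2) then (1:ℕ) else 0) = (if p % 3 = 1 then 1 else 0) := by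
      intro p hp
      rw [Finset.mem_range] at hp
      split_ifs <;> omega
    rw [Finset.sum_congr rfl hc, sum_range_mod3]
    split_ifs <;> omega
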